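/- Let M ≥ 1 and let A, B ⊆ {0, 1, …, M−1} be such that A ⊕ B = ℤ/Mℤ is a tiling, with mask polynomials A(x) = ∑_{a∈A} x^a and B(x) = ∑_{b∈B} x^b. Let t ≥ 1 be an integer such that for every integer s > 1, if the cyclotomic polynomial Φ_s(x) divides A(x) then s divides t. Then x^M − 1 divides (x^t − 1)·B(x) in ℤ[x]; consequently the image of B in ℤ/Mℤ is invariant under adding t, i.e. B + t = B in ℤ/Mℤ. -/

import Mathlib

open Polynomial Finset

/-- If `A ⊕ B = ℤ/Mℤ` is a tiling and `t ≥ 1` is such that `s ∣ t` whenever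
`Φ_s(x) ∣ A(x)` for `s > 1`, then `x^M - 1` divides `(x^t - 1)·B(x)`;
consequently the image of `B` in `ℤ/Mℤ` is invariant under adding `t`. -/
theorem stmt_6 (M : ℕ) (hM : 1 ≤ M) (A B : Finset ℕ)
    (hA : ∀ a ∈ A, a < M) (hB : ∀ b ∈ B, b < M)
    (htile : ∀ y : ZMod M, ∃! p : ℕ × ℕ,
      p.1 ∈ A ∧ p.2 ∈ B ∧ ((p.1 : ZMod M) + (p.2 : ZMod M) = y))
    (t : ℕ) (ht : 1 ≤ t)
    (hcyc : ∀ s : ℕ, 1 < s → cyclotomic s ℤ ∣ (∑ a ∈ A, X ^ a) → s ∣ t) :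
    (X ^ M - 1 : ℤ[X]) ∣ (X ^ t - 1) * (∑ b ∈ B, X ^ b) ∧
      Finset.image (fun b : ℕ => (b : ZMod M) + (t : ZMod M)) B =
        Finset.image (fun b : ℕ => (b : ZMod M)) B := by
  haveI : NeZero M := ⟨by omega⟩
  have hM0 : 0 < M := hM
  -- step 1: X^M - 1 ∣ X^n - X^(n % M)
  have hdvdmod : ∀ n : ℕ, (X ^ M - 1 : ℤ[X]) ∣ X ^ n - X ^ (n % M) := by
    intro n
    have h1 : (X : ℤ[X]) ^ n - X ^ (n % M) = X ^ (n % M) * ((X ^ M) ^ (n / M) - 1) := by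
      rw [mul_sub, mul_one, ← pow_mul, ← pow_add]
      rw [Nat.add_comm, Nat.div_add_mod]
    rw [h1]
    refine Dvd.dvd.mul_left ?_ _
    have := sub_dvd_pow_sub_pow ((X : ℤ[X]) ^ M) 1 (n / M)
    simpa using this
  -- step 2: tiling congruence
  have hsum : ∑ p ∈ A ×ˢ B, (X : ℤ[X]) ^ ((p.1 + p.2) % M) = ∑ j ∈ range M, X ^ j := by
    refine Finset.sum_bij (fun p _ => (p.1 + p.2) % M) ?_ ?_ ?_ ?_
    · intro p hp
      exact Finset.mem_range.2 (Nat.mod_lt _ hM0)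
    · intro p hp q hq h
      have h' : (p.1 + p.2) % M = (q.1 + q.2) % M := h
      simp only [Finset.mem_product] at hp hq
      have hz : ((p.1 : ZMod M) + p.2) = ((q.1 : ZMod M) + q.2) := by
        have : (((p.1 + p.2) % M : ℕ) : ZMod M) = (((q.1 + q.2) % M : ℕ) : ZMod M) := by
          rw [h']
        rwa [ZMod.natCast_mod, ZMod.natCast_mod, Nat.cast_add, Nat.cast_add] at this
      obtain ⟨r, hr, hur⟩ := htile ((q.1 : ZMod M) + q.2)
      have h1 := hur p ⟨hp.1, hp.2, hz⟩
      have h2 := hur q ⟨hq.1, hq.2, rfl⟩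
      rw [h1, h2]
    · intro j hj
      obtain ⟨p, ⟨hp1, hp2, hp3⟩, _⟩ := htile (j : ZMod M)
      refine ⟨p, Finset.mem_product.2 ⟨hp1, hp2⟩, ?_⟩
      have : (((p.1 + p.2) % M : ℕ) : ZMod M) = (j : ZMod M) := by
        rw [ZMod.natCast_mod, Nat.cast_add, hp3]
      have hjM := Finset.mem_range.1 hj
      have := congrArg ZMod.val this
      rwa [ZMod.val_cast_of_lt (Nat.mod_lt _ hM0), ZMod.val_cast_of_lt hjM] at this
    · intro p hp; rfl
  have hkey : (X ^ M - 1 : ℤ[X]) ∣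
      (∑ a ∈ A, X ^ a) * (∑ b ∈ B, X ^ b) - ∑ j ∈ range M, X ^ j := by
    have hprod : (∑ a ∈ A, (X : ℤ[X]) ^ a) * (∑ b ∈ B, X ^ b)
        = ∑ p ∈ A ×ˢ B, X ^ (p.1 + p.2) := by
      rw [Finset.sum_mul_sum]
      rw [← Finset.sum_product']
      exact Finset.sum_congr rfl fun p _ => (pow_add X p.1 p.2).symm
    rw [hprod, ← hsum, ← Finset.sum_sub_distrib]
    exact Finset.dvd_sum fun p _ => hdvdmod _
  -- step 3: each cyclotomic over ℚ divides (X^t-1)*Bq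
  set Aq : ℚ[X] := (∑ a ∈ A, X ^ a : ℤ[X]).map (Int.castRingHom ℚ) with hAq
  set Bq : ℚ[X] := (∑ b ∈ B, X ^ b : ℤ[X]).map (Int.castRingHom ℚ) with hBq
  have hkeyq : (X ^ M - 1 : ℚ[X]) ∣ Aq * Bq - ∑ j ∈ range M, X ^ j := by
    obtain ⟨q, hq⟩ := hkey
    refine ⟨q.map (Int.castRingHom ℚ), ?_⟩
    have h2 := congrArg (Polynomial.map (Int.castRingHom ℚ)) hq
    rw [hAq, hBq]
    simp only [Polynomial.map_mul, Polynomial.map_sub, Polynomial.map_pow,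
      Polynomial.map_sum, Polynomial.map_one, Polynomial.map_X] at h2 ⊢
    linear_combination h2
  have hdvds : ∀ s ∈ M.divisors, cyclotomic s ℚ ∣ (X ^ t - 1) * Bq := by
    intro s hs
    have hs0 : 0 < s := Nat.pos_of_mem_divisors hs
    by_cases hs1 : s = 1
    · subst hs1
      rw [cyclotomic_one]
      exact Dvd.dvd.mul_right (by simpa using sub_dvd_pow_sub_pow (X : ℚ[X]) 1 t) _
    · have hserase : s ∈ M.divisors.erase 1 := Finset.mem_erase.2 ⟨hs1, hs⟩
      have hdR : cyclotomic s ℚ ∣ ∑ j ∈ range M, (X : ℚ[X]) ^ j := by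
        rw [← prod_cyclotomic_eq_geom_sum hM0 ℚ]
        exact Finset.dvd_prod_of_mem _ hserase
      have hdXM : cyclotomic s ℚ ∣ (X ^ M - 1 : ℚ[X]) := by
        rw [← prod_cyclotomic_eq_X_pow_sub_one hM0 ℚ]
        exact Finset.dvd_prod_of_mem _ hs
      have hdAB : cyclotomic s ℚ ∣ Aq * Bq := by
        obtain ⟨q, hq⟩ := hkeyq
        have : Aq * Bq = (X ^ M - 1) * q + ∑ j ∈ range M, X ^ j := by linear_combination hq
        rw [this]
        exact dvd_add (hdXM.mul_right _) hdR
      have hprime : Prime (cyclotomic s ℚ) := (cyclotomic.irreducible_rat hs0).prime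
      rcases hprime.2.2 _ _ hdAB with hca | hcb
      · -- divides Aq: pull back, use hcyc
        have hdz : cyclotomic s ℤ ∣ (∑ a ∈ A, X ^ a) := by
          rw [← Polynomial.map_dvd_map (Int.castRingHom ℚ)
            Int.cast_injective (cyclotomic.monic s ℤ)]
          rwa [Polynomial.map_cyclotomic]
        have hst : s ∣ t := hcyc s (by omega) hdz
        obtain ⟨k, hk⟩ := hst
        have : (X ^ s - 1 : ℚ[X]) ∣ X ^ t - 1 := by
          rw [hk, pow_mul]
          simpa using sub_dvd_pow_sub_pow ((X : ℚ[X]) ^ s) 1 k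
        exact Dvd.dvd.mul_right ((cyclotomic.dvd_X_pow_sub_one s ℚ).trans this) _
      · exact hcb.mul_left _
  have hdvdq : (X ^ M - 1 : ℚ[X]) ∣ (X ^ t - 1) * Bq := by
    rw [← prod_cyclotomic_eq_X_pow_sub_one hM0 ℚ]
    refine Finset.prod_dvd_of_coprime ?_ hdvds
    intro a ha b hb hab
    exact cyclotomic.isCoprime_rat hab
  have hmain : (X ^ M - 1 : ℤ[X]) ∣ (X ^ t - 1) * (∑ b ∈ B, X ^ b) := by
    have hmonic : ((X : ℤ[X]) ^ M - 1).Monic := by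
      have := monic_X_pow_sub_C (1 : ℤ) (by omega : M ≠ 0)
      simpa using this
    rw [← Polynomial.map_dvd_map (Int.castRingHom ℚ)
      Int.cast_injective hmonic]
    simpa [Polynomial.map_mul, Polynomial.map_sub, Polynomial.map_pow,
      Polynomial.map_one] using hdvdq
  refine ⟨hmain, ?_⟩
  -- step 4: consequence in ZMod M via AddMonoidAlgebra
  set S := AddMonoidAlgebra ℤ (ZMod M)
  set φ : ℤ[X] →ₐ[ℤ] S := aeval (AddMonoidAlgebra.single (1 : ZMod M) (1 : ℤ)) with hφ
  have hXpow : ∀ n : ℕ, φ (X ^ n) = AddMonoidAlgebra.single ((n : ZMod M)) (1 : ℤ) := by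
    intro n
    rw [map_pow, hφ, aeval_X, AddMonoidAlgebra.single_pow]
    congr 1
    · simp [nsmul_eq_mul]
    · simp
  have hφ0 : φ ((X ^ t - 1) * (∑ b ∈ B, X ^ b)) = 0 := by
    obtain ⟨q, hq⟩ := hmain
    rw [hq, map_mul, map_sub, hXpow, map_one]
    have : AddMonoidAlgebra.single ((M : ZMod M)) (1 : ℤ) = 1 := by
      rw [ZMod.natCast_self]; rfl
    rw [this, sub_self, zero_mul]
  have hexp : (∑ b ∈ B, AddMonoidAlgebra.single ((b : ZMod M) + (t : ZMod M)) (1 : ℤ))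
      = ∑ b ∈ B, AddMonoidAlgebra.single ((b : ZMod M)) (1 : ℤ) := by
    have h1 : φ ((X ^ t - 1) * (∑ b ∈ B, X ^ b))
        = (∑ b ∈ B, AddMonoidAlgebra.single ((b : ZMod M) + (t : ZMod M)) (1 : ℤ))
          - ∑ b ∈ B, AddMonoidAlgebra.single ((b : ZMod M)) (1 : ℤ) := by
      rw [map_mul, map_sub, map_one, map_sum]
      simp only [hXpow]
      rw [sub_mul, one_mul, Finset.mul_sum]
      congr 1
      refine Finset.sum_congr rfl fun b _ => ?_
      rw [AddMonoidAlgebra.single_mul_single, one_mul, add_comm]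
    rw [h1] at hφ0
    exact sub_eq_zero.1 hφ0
  classical
  have hcount : ∀ (f : ℕ → ZMod M) (y : ZMod M),
      (∑ b ∈ B, AddMonoidAlgebra.single (f b) (1 : ℤ)).coeff y
        = ((B.filter (fun b => f b = y)).card : ℤ) := by
    intro f y
    rw [AddMonoidAlgebra.coeff_sum, Finsupp.finset_sum_apply]
    rw [← Finset.sum_boole]
    refine Finset.sum_congr rfl fun b _ => ?_
    simp [Finsupp.single_apply]
  refine Finset.ext fun y => ?_
  have hy := congrArg (fun v : AddMonoidAlgebra ℤ (ZMod M) => v.coeff y) hexp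
  rw [hcount (fun b => (b : ZMod M) + t) y, hcount (fun b => (b : ZMod M)) y] at hy
  have hcard : (B.filter fun b : ℕ => (b : ZMod M) + t = y).card
      = (B.filter fun b : ℕ => (b : ZMod M) = y).card := by exact_mod_cast hy
  have h1 : (∃ b ∈ B, (b : ZMod M) + t = y) ↔ (∃ b ∈ B, (b : ZMod M) = y) := by
    rw [← Finset.filter_nonempty_iff, ← Finset.filter_nonempty_iff,
      ← Finset.card_pos, ← Finset.card_pos, hcard]
  simpa only [Finset.mem_image] using h1
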